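/- Let S be a finite semigroup, let c : ℕ → ℕ → S be a multiplicative coloring (c i k = c i j * c j k whenever i < j < k), and let w : ℕ → ℕ be any function. Then there exist indices i < j such that c i j is idempotent (c i j * c i j = c i j) and w i ≤ w j. Equivalently, it is impossible that for every idempotent e of S, c i j = e always forces the strict decrease w j < w i. (This is the abstract core of the paper's Theorems 6 and 7: if every circular idempotent query-mapping pair has an arc from an argument in the domain to the corresponding argument in the range — forcing a strict decrease of a non-negative integer norm — then no infinite derivation exists.) -/

import Mathlib

private lemma ultra_const {S : Type*} [Finite S] (U : Ultrafilter ℕ) (g : ℕ → S) :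
    ∃ s : S, {n | g n = s} ∈ U := by
  by_contra h
  push_neg at h
  have h2 : ∀ s : S, {n | g n = s}ᶜ ∈ U := fun s =>
    Ultrafilter.compl_mem_iff_notMem.2 (h s)
  have h3 : (⋂ s : S, {n | g n = s}ᶜ) ∈ U := Filter.iInter_mem.2 h2
  obtain ⟨n, hn⟩ := Filter.nonempty_of_mem h3
  simp only [Set.mem_iInter, Set.mem_compl_iff, Set.mem_setOf_eq] at hn
  exact hn (g n) rfl

/-- Abstract core of the query-mapping-pair termination criterion: for a
multiplicative coloring into a finite semigroup and any weight function,
some pair with idempotent color fails to strictly decrease the weight. -/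
theorem exists_idempotent_pair_no_decrease {S : Type*} [Semigroup S] [Finite S]
    (c : ℕ → ℕ → S)
    (hc : ∀ i j k : ℕ, i < j → j < k → c i k = c i j * c j k)
    (w : ℕ → ℕ) :
    ∃ i j : ℕ, i < j ∧ c i j * c i j = c i j ∧ w i ≤ w j := by
  by_contra hcon
  push_neg at hcon
  set U : Ultrafilter ℕ := Filter.hyperfilter ℕ with hU
  have hinf : ∀ s : Set ℕ, s ∈ U → s.Infinite := by
    intro s hs
    by_contra hfin
    rw [Set.not_infinite] at hfin
    exact Filter.notMem_hyperfilter_of_finite hfin hs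
  -- each row is a.e. constant
  choose f hf using fun i => ultra_const U (c i)
  -- f is a.e. constant e
  obtain ⟨e, he⟩ := ultra_const U f
  -- e is idempotent
  have hA : ({i | f i = e} : Set ℕ).Infinite := hinf _ he
  obtain ⟨i, hi⟩ := hA.nonempty
  have hBmem : {j | c i j = f i} ∩ {j | f j = e} ∈ U := Filter.inter_mem (hf i) he
  obtain ⟨j, hj, hij⟩ := (hinf _ hBmem).exists_gt i
  have hCmem : {k | c i k = f i} ∩ {k | c j k = f j} ∈ U :=
    Filter.inter_mem (hf i) (hf j)
  obtain ⟨k, hk, hjk⟩ := (hinf _ hCmem).exists_gt j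
  have hee : e * e = e := by
    have h1 : c i k = c i j * c j k := hc i j k hij hjk
    rw [hk.1, hj.1, hk.2, hj.2, hi] at h1
    exact h1.symm
  -- infinite descent on w over the set {i | f i = e}
  have descent : ∀ n : ℕ, ∀ i : ℕ, f i = e → w i ≤ n → False := by
    intro n
    induction n with
    | zero =>
      intro i hi hwi
      have hB : {j | c i j = f i} ∩ {j | f j = e} ∈ U := Filter.inter_mem (hf i) he
      obtain ⟨j, hj, hij⟩ := (hinf _ hB).exists_gt i
      have hcij : c i j * c i j = c i j := by rw [hj.1, hi, hee]
      have := hcon i j hij hcij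
      omega
    | succ n ih =>
      intro i hi hwi
      have hB : {j | c i j = f i} ∩ {j | f j = e} ∈ U := Filter.inter_mem (hf i) he
      obtain ⟨j, hj, hij⟩ := (hinf _ hB).exists_gt i
      have hcij : c i j * c i j = c i j := by rw [hj.1, hi, hee]
      have := hcon i j hij hcij
      exact ih j hj.2 (by omega)
  exact descent (w i) i hi le_rfl
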